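/- Every right commutative AG**-groupoid is a CA-AG-groupoid; that is, if a magma S satisfies the left invertive law, the AG** identity a·(b·c) = b·(a·c), and right commutativity a·(b·c) = a·(c·b) for all a,b,c, then S satisfies cyclic associativity a·(b·c) = c·(a·b) for all a,b,c. -/
import Mathlib

theorem right_commutative_AG_star_star_is_CA {S : Type*} [Mul S]
    (li : ∀ a b c : S, (a * b) * c = (c * b) * a)
    (agss : ∀ a b c : S, a * (b * c) = b * (a * c))
    (rc : ∀ a b c : S, a * (b * c) = a * (c * b)) :
    ∀ a b c : S, a * (b * c) = c * (a * b) := by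
  intro a b c
  rw [rc, agss]
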